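/- Let R be a commutative ring, a ∈ R, and n ≥ 1. Let C_n be the n × n cyclic permutation matrix over R. Then there exist matrices P, Q ∈ Matrix (Fin n) (Fin n) R whose determinants are units, such that P * (a • C_n − 1) * Q equals the diagonal matrix whose i-th diagonal entry is 1 for i < n − 1 and whose last diagonal entry is a^n − 1. -/

import Mathlib

def cyclicPermMatrix (n : ℕ) (R : Type*) [CommRing R] : Matrix (Fin n) (Fin n) R :=
  Matrix.of fun i j => if (j : ℕ) = ((i : ℕ) + 1) % n then 1 else 0

theorem smul_cyclicPermMatrix_sub_one_equiv_diagonal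
    (R : Type*) [CommRing R] (a : R) (n : ℕ) (hn : 1 ≤ n) :
    ∃ P Q : Matrix (Fin n) (Fin n) R, IsUnit P.det ∧ IsUnit Q.det ∧
      P * (a • cyclicPermMatrix n R - 1) * Q =
        Matrix.diagonal (fun i : Fin n =>
          if (i : ℕ) < n - 1 then (1 : R) else a ^ n - 1) := by
  obtain ⟨m, rfl⟩ : ∃ m, n = m + 1 := ⟨n - 1, by omega⟩
  set σ : Equiv.Perm (Fin (m+1)) := Equiv.addRight 1 with hσ
  have hσapp : ∀ i : Fin (m+1), σ i = i + 1 := fun _ => rfl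
  have hC : cyclicPermMatrix (m+1) R = σ.toPEquiv.toMatrix := by
    ext i j
    rw [cyclicPermMatrix, Matrix.of_apply, PEquiv.toMatrix_apply, Equiv.toPEquiv_apply]
    simp only [Option.mem_def, Option.some.injEq, hσapp]
    congr 1
    simp [Fin.ext_iff, Fin.add_def, Fin.val_one', Nat.add_mod_mod, eq_comm]
  set M : Matrix (Fin (m+1)) (Fin (m+1)) R := a • cyclicPermMatrix (m+1) R - 1 with hM
  set P : Matrix (Fin (m+1)) (Fin (m+1)) R :=
    Matrix.of (fun i j => if (i:ℕ) ≤ (j:ℕ) then a ^ ((j:ℕ) - (i:ℕ)) else 0) with hP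
  set N : Matrix (Fin (m+1)) (Fin (m+1)) R :=
    Matrix.of (fun i j => if j = 0 then a ^ (m + 1 - (i:ℕ)) else 0) with hN
  set Q0 : Matrix (Fin (m+1)) (Fin (m+1)) R :=
    Matrix.of (fun i j => if i = j then 1 else if j = 0 then a ^ (m + 1 - (i:ℕ)) else 0) with hQ0
  -- row reduction
  have hPM : P * M = N - 1 := by
    rw [hM, hC, Matrix.mul_sub, Matrix.mul_one, Matrix.mul_smul,
      PEquiv.mul_toMatrix_toPEquiv]
    ext i k
    have hsk : σ.symm k = k - 1 := by
      rw [Equiv.symm_apply_eq, hσapp, sub_add_cancel]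
    simp only [Matrix.sub_apply, Matrix.smul_apply, Matrix.submatrix_apply, id_eq,
      smul_eq_mul, Matrix.of_apply, Matrix.one_apply, hsk, hP, hN]
    by_cases hk : k = 0
    · subst hk
      have h1 : (((0:Fin (m+1)) - 1 : Fin (m+1)) : ℕ) = m := by
        rw [Fin.coe_sub_one]; simp
      rw [h1]
      have hi : (i:ℕ) ≤ m := Nat.lt_succ_iff.mp i.isLt
      rw [if_pos hi, if_pos rfl]
      congr 1
      · rw [← pow_succ']
        congr 1; omega
      · by_cases hi0 : i = 0
        · subst hi0; simp
        · rw [if_neg, if_neg hi0]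
          simp only [Fin.ext_iff, Fin.val_zero] at hi0 ⊢
          omega
    · have hk1 : ((k - 1 : Fin (m+1)) : ℕ) = (k:ℕ) - 1 := by
        rw [Fin.coe_sub_one, if_neg hk]
      have hkpos : 0 < (k:ℕ) := by
        rcases Nat.eq_zero_or_pos (k:ℕ) with h | h
        · exact absurd (Fin.ext h) hk
        · exact h
      rw [hk1, if_neg hk]
      simp only [Fin.ext_iff, Fin.val_zero]
      rcases lt_trichotomy ((i:ℕ)) ((k:ℕ)) with h | h | h
      · rw [if_pos (by omega : (i:ℕ) ≤ (k:ℕ) - 1), if_pos (le_of_lt h),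
          if_neg (by omega : ¬ (i:ℕ) = (k:ℕ))]
        rw [← pow_succ']
        rw [(by omega : (k:ℕ) - 1 - (i:ℕ) + 1 = (k:ℕ) - (i:ℕ))]
        ring
      · rw [if_neg (by omega : ¬ (i:ℕ) ≤ (k:ℕ) - 1), if_pos (le_of_eq h), if_pos h,
          (by omega : (k:ℕ) - (i:ℕ) = 0)]
        ring
      · rw [if_neg (by omega : ¬ (i:ℕ) ≤ (k:ℕ) - 1), if_neg (by omega : ¬ (i:ℕ) ≤ (k:ℕ)),
          if_neg (by omega : ¬ (i:ℕ) = (k:ℕ))]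
        ring
  -- column reduction
  have hNQ0 : N * Q0 = N := by
    ext i k
    rw [Matrix.mul_apply]
    simp only [hN, hQ0, Matrix.of_apply, ite_mul, zero_mul]
    rw [Finset.sum_ite_eq' Finset.univ (0 : Fin (m+1))
      (fun j => a ^ (m + 1 - (i:ℕ)) * (if j = k then 1 else if k = 0 then a ^ (m + 1 - (j:ℕ)) else 0))]
    simp only [Finset.mem_univ, if_true]
    by_cases hk : k = 0
    · subst hk; simp
    · rw [if_neg (by exact fun h => hk h.symm), if_neg hk, mul_zero, if_neg hk]
  have hNQ : (N - 1) * Q0 =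
      Matrix.diagonal (fun i : Fin (m+1) => if i = 0 then a ^ (m+1) - 1 else -1) := by
    rw [Matrix.sub_mul, Matrix.one_mul, hNQ0]
    ext i k
    simp only [Matrix.sub_apply, hN, hQ0, Matrix.of_apply, Matrix.diagonal_apply]
    by_cases hik : i = k
    · subst hik
      by_cases hi0 : i = 0 <;> simp [hi0]
    · by_cases hk : k = 0
      · subst hk; simp [hik]
      · simp [hik, hk]
  -- sign fix
  set S : Matrix (Fin (m+1)) (Fin (m+1)) R :=
    Matrix.diagonal (fun i : Fin (m+1) => if i = 0 then 1 else -1) with hS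
  have hSD : S * Matrix.diagonal (fun i : Fin (m+1) => if i = 0 then a ^ (m+1) - 1 else -1) =
      Matrix.diagonal (fun i : Fin (m+1) => if i = 0 then a ^ (m+1) - 1 else 1) := by
    rw [hS, Matrix.diagonal_mul_diagonal, Matrix.diagonal_eq_diagonal_iff]
    intro i
    by_cases h : i = 0 <;> simp [h]
  -- permutation conjugation
  have hperm : σ.toPEquiv.toMatrix *
      Matrix.diagonal (fun i : Fin (m+1) => if i = 0 then a ^ (m+1) - 1 else 1) *
      σ.symm.toPEquiv.toMatrix =
      Matrix.diagonal (fun i : Fin (m+1) => if (i : ℕ) < m + 1 - 1 then (1 : R) else a ^ (m+1) - 1) := by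
    rw [Matrix.mul_assoc, PEquiv.mul_toMatrix_toPEquiv, PEquiv.toMatrix_toPEquiv_mul]
    ext i j
    simp only [Matrix.submatrix_apply, id_eq, Equiv.symm_symm, Nat.add_sub_cancel]
    by_cases hij : i = j
    · subst hij
      rw [Matrix.diagonal_apply_eq, Matrix.diagonal_apply_eq, hσapp]
      have hlast : (i + 1 = 0) ↔ (i:ℕ) = m := by
        rw [add_eq_zero_iff_eq_neg, Fin.ext_iff, Fin.coe_neg_one]
      have him : (i:ℕ) ≤ m := Nat.lt_succ_iff.mp i.isLt
      by_cases h : (i:ℕ) < m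
      · rw [if_neg (by rw [hlast]; omega), if_pos h]
      · rw [if_pos (by rw [hlast]; omega), if_neg h]
    · have h2 : σ i ≠ σ j := fun h => hij (σ.injective h)
      rw [Matrix.diagonal_apply_ne _ h2, Matrix.diagonal_apply_ne _ hij]
  -- determinants
  have hdetP : P.det = 1 := by
    have ht : P.BlockTriangular id := by
      intro i j hij
      have hlt : (j:ℕ) < (i:ℕ) := hij
      rw [hP, Matrix.of_apply, if_neg (by omega)]
    rw [Matrix.det_of_upperTriangular ht]
    apply Finset.prod_eq_one
    intro i _
    simp [hP]
  have hdetQ0 : Q0.det = 1 := by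
    have ht : Q0.BlockTriangular OrderDual.toDual := by
      intro i j hij
      have hij' : i < j := hij
      rw [hQ0, Matrix.of_apply, if_neg (ne_of_lt hij'), if_neg]
      intro h
      subst h
      exact absurd hij' (by simp [Fin.lt_def])
    rw [Matrix.det_of_lowerTriangular _ ht]
    apply Finset.prod_eq_one
    intro i _
    simp [hQ0]
  have hdetS : IsUnit S.det := by
    apply IsUnit.of_mul_eq_one S.det
    rw [hS, Matrix.det_diagonal, ← Finset.prod_mul_distrib]
    apply Finset.prod_eq_one
    intro i _
    by_cases h : i = 0 <;> simp [h]
  have hdetE : ∀ τ : Equiv.Perm (Fin (m+1)), IsUnit (τ.toPEquiv.toMatrix : Matrix (Fin (m+1)) (Fin (m+1)) R).det := by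
    intro τ
    rw [show (τ.toPEquiv.toMatrix : Matrix (Fin (m+1)) (Fin (m+1)) R) = τ.permMatrix R from rfl,
      Matrix.det_permutation]
    rcases Int.units_eq_one_or (Equiv.Perm.sign τ) with h | h <;> simp [h]
  refine ⟨σ.toPEquiv.toMatrix * S * P, Q0 * σ.symm.toPEquiv.toMatrix, ?_, ?_, ?_⟩
  · rw [Matrix.det_mul, Matrix.det_mul, hdetP, mul_one]
    exact (hdetE σ).mul hdetS
  · rw [Matrix.det_mul, hdetQ0, one_mul]
    exact hdetE σ.symm
  · calc σ.toPEquiv.toMatrix * S * P * M * (Q0 * σ.symm.toPEquiv.toMatrix)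
        = σ.toPEquiv.toMatrix * (S * (P * M * Q0)) * σ.symm.toPEquiv.toMatrix := by
          noncomm_ring
      _ = _ := by
          rw [hPM, hNQ, hSD]
          exact hperm
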